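/- arXiv:1602.04474 — 4 statements merged into one kernel-verified Lean document; each statement's English description precedes it below -/
import Mathlib

section
/- (Cordes inequality) Let A, B be bounded self-adjoint positive semidefinite linear operators on a separable Hilbert space H and let 0 ≤ s ≤ 1. Then ‖AˢBˢ‖ ≤ ‖AB‖ˢ, where ‖·‖ denotes the operator norm and Aˢ is defined by the continuous functional calculus. -/
open scoped NNReal ENNReal
open Filter Topology

section Aux

lemma sr_swap' {X : Type*} [NormedRing X] [NormedAlgebra ℝ X] (x y : X) :
    spectralRadius ℝ (x * y) = spectralRadius ℝ (y * x) := by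
  have h := spectrum.nonzero_mul_comm (𝕜 := ℝ) x y
  unfold spectralRadius
  apply le_antisymm <;>
  · refine iSup₂_le fun k hk => ?_
    rcases eq_or_ne k 0 with rfl | hk0
    · simp
    · first
      | exact le_iSup₂ (f := fun k (_ : k ∈ spectrum ℝ (y * x)) => (‖k‖₊ : ℝ≥0∞)) k
          (h ▸ Set.mem_diff_singleton.mpr ⟨hk, hk0⟩ : k ∈ spectrum ℝ (y*x) \ {0}).1
      | exact le_iSup₂ (f := fun k (_ : k ∈ spectrum ℝ (x * y)) => (‖k‖₊ : ℝ≥0∞)) k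
          (h ▸ Set.mem_diff_singleton.mpr ⟨hk, hk0⟩ : k ∈ spectrum ℝ (x*y) \ {0}).1

lemma norm_mul_le_swap' {X : Type*} [CStarAlgebra X] [Nontrivial X] {x y : X}
    (h : IsSelfAdjoint (x * y)) : ‖x * y‖ ≤ ‖y * x‖ := by
  rw [← h.toReal_spectralRadius_eq_norm, sr_swap']
  calc (spectralRadius ℝ (y * x)).toReal ≤ ((‖y * x‖₊ : ℝ≥0∞)).toReal :=
        ENNReal.toReal_mono (by simp) (spectrum.spectralRadius_le_nnnorm _)
    _ = ‖y * x‖ := rfl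

variable {H : Type*} [NormedAddCommGroup H] [InnerProductSpace ℂ H] [CompleteSpace H] [Nontrivial H]

lemma my_rpow_add (a : H →L[ℂ] H) {x y : ℝ} (hx : 0 ≤ x) (hy : 0 ≤ y) (ha : 0 ≤ a) :
    CFC.rpow a (x + y) = CFC.rpow a x * CFC.rpow a y := by
  rcases hx.eq_or_lt with rfl | hx
  · simp [CFC.rpow_eq_pow, CFC.rpow_zero a ha]
  rcases hy.eq_or_lt with rfl | hy
  · rw [add_zero, CFC.rpow_eq_pow (y := (0:ℝ)), CFC.rpow_zero a ha, mul_one]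
  show cfc (fun z : ℝ≥0 => z ^ (x + y)) a = cfc (fun z : ℝ≥0 => z ^ x) a * cfc (fun z : ℝ≥0 => z ^ y) a
  rw [← cfc_mul _ _ a (NNReal.continuous_rpow_const hx.le).continuousOn
    (NNReal.continuous_rpow_const hy.le).continuousOn]
  exact cfc_congr fun z _ => NNReal.rpow_add' (by positivity) z

lemma my_norm_rpow_le (a : H →L[ℂ] H) (ha : 0 ≤ a) {x : ℝ} (hx : 0 ≤ x) :
    ‖CFC.rpow a x‖ ≤ ‖a‖ ^ x := by
  show ‖cfc (fun z : ℝ≥0 => z ^ x) a‖ ≤ ‖a‖ ^ x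
  rw [cfc_nnreal_eq_real _ _ ha]
  refine norm_cfc_le (Real.rpow_nonneg (norm_nonneg a) x) fun z hz => ?_
  have h1 : (z.toNNReal : ℝ) ≤ ‖a‖ := by
    refine le_trans ?_ (spectrum.norm_le_norm_of_mem hz)
    rw [Real.coe_toNNReal']
    exact max_le (le_abs_self z) (abs_nonneg z)
  have h2 : (0:ℝ) ≤ (z.toNNReal : ℝ) := (z.toNNReal).2
  rw [NNReal.coe_rpow, Real.norm_of_nonneg (Real.rpow_nonneg h2 x)]
  exact Real.rpow_le_rpow h2 h1 hx

lemma cordes_key (a b : H →L[ℂ] H) (ha : 0 ≤ a) (hb : 0 ≤ b) {s t : ℝ}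
    (hs : 0 ≤ s) (ht : 0 ≤ t) :
    ‖CFC.rpow a (s + t) * CFC.rpow b (s + t)‖ ^ 2 ≤
      ‖CFC.rpow a (2 * s) * CFC.rpow b (2 * s)‖ * ‖CFC.rpow a (2 * t) * CFC.rpow b (2 * t)‖ := by
  set p : ℝ → (H →L[ℂ] H) := fun x => CFC.rpow a x with hp
  set q : ℝ → (H →L[ℂ] H) := fun x => CFC.rpow b x with hq
  have hpsa : ∀ x : ℝ, IsSelfAdjoint (p x) := fun x => .of_nonneg CFC.rpow_nonneg
  have hqsa : ∀ x : ℝ, IsSelfAdjoint (q x) := fun x => .of_nonneg CFC.rpow_nonneg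
  have hpadd : ∀ x y : ℝ, 0 ≤ x → 0 ≤ y → p x * p y = p (x + y) :=
    fun x y hx hy => (my_rpow_add a hx hy ha).symm
  have hqadd : ∀ x y : ℝ, 0 ≤ x → 0 ≤ y → q x * q y = q (x + y) :=
    fun x y hx hy => (my_rpow_add b hx hy hb).symm
  set u := s + t with hu
  have hu0 : 0 ≤ u := by positivity
  have h2s : (0:ℝ) ≤ 2 * s := by positivity
  have h2t : (0:ℝ) ≤ 2 * t := by positivity
  have e1 : ‖p u * q u‖ ^ 2 = ‖(q u * p (2 * t)) * (p (2 * s) * q u)‖ := by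
    rw [sq, ← CStarRing.norm_star_mul_self (x := p u * q u)]
    congr 1
    rw [star_mul, (hpsa u).star_eq, (hqsa u).star_eq]
    calc q u * p u * (p u * q u) = q u * (p u * p u) * q u := by noncomm_ring
      _ = q u * (p (2 * t) * p (2 * s)) * q u := by
          rw [hpadd u u hu0 hu0, hpadd _ _ h2t h2s]; rw [hu]; ring_nf
      _ = (q u * p (2 * t)) * (p (2 * s) * q u) := by noncomm_ring
  -- step 2 : selfadjointness of the product, swap
  have e2 : IsSelfAdjoint ((q u * p (2 * t)) * (p (2 * s) * q u)) := by
    rw [IsSelfAdjoint]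
    simp only [star_mul, (hpsa _).star_eq, (hqsa _).star_eq]
    calc q u * p (2*s) * (p (2*t) * q u) = q u * (p (2*s) * p (2*t)) * q u := by noncomm_ring
      _ = q u * (p (2*t) * p (2*s)) * q u := by
          rw [hpadd _ _ h2s h2t, hpadd _ _ h2t h2s]; ring_nf
      _ = q u * p (2*t) * (p (2*s) * q u) := by noncomm_ring
  have e3 : ‖(q u * p (2 * t)) * (p (2 * s) * q u)‖ ≤
      ‖(p (2 * s) * q u) * (q u * p (2 * t))‖ := norm_mul_le_swap' e2
  -- step 3 : rewrite and split
  have e4 : (p (2 * s) * q u) * (q u * p (2 * t)) =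
      (p (2 * s) * q (2 * s)) * (q (2 * t) * p (2 * t)) := by
    calc (p (2*s) * q u) * (q u * p (2*t)) = p (2*s) * (q u * q u) * p (2*t) := by noncomm_ring
      _ = p (2*s) * (q (2*s) * q (2*t)) * p (2*t) := by
          rw [hqadd u u hu0 hu0, hqadd _ _ h2s h2t]; rw [hu]; ring_nf
      _ = (p (2*s) * q (2*s)) * (q (2*t) * p (2*t)) := by noncomm_ring
  have e5 : ‖(p (2 * s) * q (2 * s)) * (q (2 * t) * p (2 * t))‖ ≤
      ‖p (2 * s) * q (2 * s)‖ * ‖q (2 * t) * p (2 * t)‖ := norm_mul_le _ _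
  have e6 : ‖q (2 * t) * p (2 * t)‖ = ‖p (2 * t) * q (2 * t)‖ := by
    rw [← norm_star (p (2*t) * q (2*t)), star_mul, (hpsa _).star_eq, (hqsa _).star_eq]
  calc ‖p u * q u‖ ^ 2 = ‖(q u * p (2 * t)) * (p (2 * s) * q u)‖ := e1
    _ ≤ ‖(p (2 * s) * q u) * (q u * p (2 * t))‖ := e3
    _ = ‖(p (2 * s) * q (2 * s)) * (q (2 * t) * p (2 * t))‖ := by rw [e4]
    _ ≤ ‖p (2 * s) * q (2 * s)‖ * ‖q (2 * t) * p (2 * t)‖ := e5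
    _ = ‖p (2 * s) * q (2 * s)‖ * ‖p (2 * t) * q (2 * t)‖ := by rw [e6]

end Aux

lemma cordes_iterate (F : ℝ → ℝ) (hFnn : ∀ x, 0 ≤ F x) (hF0 : F 0 = 1)
    (hkey : ∀ s t : ℝ, 0 ≤ s → 0 ≤ t → F (s + t) ^ 2 ≤ F (2 * s) * F (2 * t))
    (C : ℝ) (hbound : ∀ x ∈ Set.Icc (0:ℝ) 1, F x ≤ C)
    {s : ℝ} (hs : 0 < s) (hs1 : s ≤ 1) : F s ≤ (F 1) ^ s := by
  set M := F 1 with hM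
  have hMnn : 0 ≤ M := hFnn 1
  -- step 1: for every ε > 0, F s ≤ (M + ε) ^ s
  have main : ∀ ε : ℝ, 0 < ε → F s ≤ (M + ε) ^ s := by
    intro ε hε
    set N := M + ε with hN
    have hN0 : 0 < N := by positivity
    set K := max C 1 / min N 1 with hK
    have hminN : 0 < min N 1 := lt_min hN0 one_pos
    have hK1 : 1 ≤ K := by
      rw [hK, le_div_iff₀ hminN, one_mul]
      exact le_trans (min_le_right _ _) (le_max_right _ _)
    have hK0 : 0 < K := lt_of_lt_of_le one_pos hK1
    have hNx_ge : ∀ x : ℝ, 0 ≤ x → x ≤ 1 → min N 1 ≤ N ^ x := by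
      intro x hx hx1
      rcases le_total 1 N with h | h
      · calc min N 1 ≤ 1 := min_le_right _ _
          _ = N ^ (0:ℝ) := (Real.rpow_zero N).symm
          _ ≤ N ^ x := Real.rpow_le_rpow_of_exponent_le h hx
      · calc min N 1 ≤ N := min_le_left _ _
          _ = N ^ (1:ℝ) := (Real.rpow_one N).symm
          _ ≤ N ^ x := Real.rpow_le_rpow_of_exponent_ge hN0 h hx1
    -- the iteration
    have iter : ∀ n : ℕ, ∀ x ∈ Set.Icc (0:ℝ) 1, F x ≤ K ^ ((2:ℝ)⁻¹ ^ n) * N ^ x := by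
      intro n
      induction n with
      | zero =>
        intro x hx
        calc F x ≤ max C 1 := le_trans (hbound x hx) (le_max_left _ _)
          _ = K * min N 1 := by rw [hK, div_mul_cancel₀ _ (ne_of_gt hminN)]
          _ ≤ K * N ^ x := by
              have := hNx_ge x hx.1 hx.2
              nlinarith
          _ = K ^ ((2:ℝ)⁻¹ ^ 0) * N ^ x := by norm_num
      | succ n ih =>
        intro x hx
        obtain ⟨hx0, hx1⟩ := hx
        set Q := (2:ℝ)⁻¹ ^ n with hQ
        have hQ0 : 0 < Q := by positivity
        have target_sq : (K ^ ((2:ℝ)⁻¹ ^ (n+1)) * N ^ x) ^ 2 = K ^ Q * N ^ (2 * x) := by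
          rw [mul_pow, ← Real.rpow_natCast (K ^ ((2:ℝ)⁻¹ ^ (n+1))) 2,
            ← Real.rpow_natCast (N ^ x) 2, ← Real.rpow_mul hK0.le, ← Real.rpow_mul hN0.le]
          norm_num [pow_succ]
          rw [hQ]
          ring_nf
        have hFx_sq : F x ^ 2 ≤ K ^ Q * N ^ (2 * x) := by
          rcases le_total x (1/2) with hhalf | hhalf
          · have k1 := hkey x 0 hx0 le_rfl
            rw [add_zero, mul_zero, hF0, mul_one] at k1
            have h2x : 2 * x ∈ Set.Icc (0:ℝ) 1 := ⟨by positivity, by linarith⟩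
            calc F x ^ 2 ≤ F (2 * x) := k1
              _ ≤ K ^ Q * N ^ (2 * x) := ih _ h2x
          · have k1 := hkey (x - 1/2) (1/2) (by linarith) (by norm_num)
            have e : x - 1/2 + 1/2 = x := by ring
            rw [e] at k1
            have e2 : 2 * (x - 1/2) = 2 * x - 1 := by ring
            have e3 : 2 * ((1:ℝ)/2) = 1 := by norm_num
            rw [e2, e3] at k1
            have h2x : 2 * x - 1 ∈ Set.Icc (0:ℝ) 1 := ⟨by linarith, by linarith⟩
            have hM_le_N : M ≤ N := by rw [hN]; linarith
            have step : F (2*x - 1) * F 1 ≤ (K ^ Q * N ^ (2*x - 1)) * N := by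
              have h1 := ih _ h2x
              have h2 : (0:ℝ) ≤ K ^ Q * N ^ (2*x-1) := by positivity
              have := hFnn (2*x-1)
              nlinarith [Real.rpow_nonneg hN0.le (2*x-1)]
            have eN : (K ^ Q * N ^ (2*x - 1)) * N = K ^ Q * N ^ (2 * x) := by
              rw [mul_assoc]
              congr 1
              have e4 : N ^ (2 * x) = N ^ (2 * x - 1) * N ^ (1:ℝ) := by
                rw [← Real.rpow_add hN0]; norm_num
              rw [e4, Real.rpow_one]
            calc F x ^ 2 ≤ F (2*x - 1) * F 1 := k1
              _ ≤ (K ^ Q * N ^ (2*x - 1)) * N := step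
              _ = K ^ Q * N ^ (2 * x) := eN
        -- conclude from squares
        have hrhs : 0 ≤ K ^ ((2:ℝ)⁻¹ ^ (n+1)) * N ^ x := by positivity
        nlinarith [hFnn x, hrhs, hFx_sq, target_sq]
    -- limit n → ∞
    have tend : Tendsto (fun n : ℕ => K ^ ((2:ℝ)⁻¹ ^ n) * N ^ s) atTop (𝓝 (N ^ s)) := by
      have h1 : Tendsto (fun n : ℕ => ((2:ℝ)⁻¹ ^ n)) atTop (𝓝 0) :=
        tendsto_pow_atTop_nhds_zero_of_lt_one (by norm_num) (by norm_num)
      have h2 : Tendsto (fun n : ℕ => K ^ ((2:ℝ)⁻¹ ^ n)) atTop (𝓝 1) := by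
        have hc : ContinuousAt (fun y : ℝ => K ^ y) 0 :=
          (Real.continuousAt_const_rpow (ne_of_gt hK0))
        have := hc.tendsto.comp h1
        simpa [Function.comp_def] using this
      have := h2.mul (tendsto_const_nhds (x := N ^ s))
      simpa using this
    exact ge_of_tendsto tend (Eventually.of_forall fun n => iter n s ⟨hs.le, hs1⟩)
  -- step 2: ε → 0
  have tendε : Tendsto (fun ε : ℝ => (M + ε) ^ s) (𝓝[>] 0) (𝓝 (M ^ s)) := by
    have hc : ContinuousAt (fun y : ℝ => y ^ s) M :=
      Real.continuousAt_rpow_const M s (Or.inr hs.le)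
    have hb : Tendsto (fun ε : ℝ => M + ε) (𝓝[>] 0) (𝓝 M) := by
      have : Tendsto (fun ε : ℝ => M + ε) (𝓝 0) (𝓝 (M + 0)) :=
        (continuous_const.add continuous_id).tendsto 0
      rw [add_zero] at this
      exact this.mono_left nhdsWithin_le_nhds
    exact hc.tendsto.comp hb
  refine ge_of_tendsto tendε ?_
  filter_upwards [self_mem_nhdsWithin] with ε hε
  exact main ε hε

set_option maxHeartbeats 800000 in
/-- Cordes inequality: for bounded self-adjoint positive operators `A, B` on a separable
Hilbert space and `0 ≤ s ≤ 1`, `‖A^s B^s‖ ≤ ‖A B‖^s`. -/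
theorem stmt_3 {H : Type*} [NormedAddCommGroup H] [InnerProductSpace ℂ H] [CompleteSpace H]
    [TopologicalSpace.SeparableSpace H]
    (A B : H →L[ℂ] H) (hA : A.IsPositive) (hB : B.IsPositive)
    (hAsa : IsSelfAdjoint A) (hBsa : IsSelfAdjoint B)
    (s : ℝ) (hs0 : 0 ≤ s) (hs1 : s ≤ 1) :
    ‖CFC.rpow A s * CFC.rpow B s‖ ≤ ‖A * B‖ ^ s := by
  rcases subsingleton_or_nontrivial H with hH | hH
  · have h0 : CFC.rpow A s * CFC.rpow B s = 0 := Subsingleton.elim _ _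
    rw [h0, norm_zero]
    exact Real.rpow_nonneg (norm_nonneg _) s
  · have ha : 0 ≤ A := (ContinuousLinearMap.nonneg_iff_isPositive A).mpr hA
    have hb : 0 ≤ B := (ContinuousLinearMap.nonneg_iff_isPositive B).mpr hB
    rcases hs0.eq_or_lt with rfl | hs
    · have eA : CFC.rpow A (0:ℝ) = 1 := by
        rw [CFC.rpow_eq_pow]; exact CFC.rpow_zero A ha
      have eB : CFC.rpow B (0:ℝ) = 1 := by
        rw [CFC.rpow_eq_pow]; exact CFC.rpow_zero B hb
      rw [eA, eB, one_mul, norm_one, Real.rpow_zero]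
    · have key : ∀ u v : ℝ, 0 ≤ u → 0 ≤ v →
          ‖CFC.rpow A (u + v) * CFC.rpow B (u + v)‖ ^ 2 ≤
            ‖CFC.rpow A (2 * u) * CFC.rpow B (2 * u)‖ *
              ‖CFC.rpow A (2 * v) * CFC.rpow B (2 * v)‖ :=
        fun u v hu hv => cordes_key A B ha hb hu hv
      have eA : CFC.rpow A (0:ℝ) = 1 := by
        rw [CFC.rpow_eq_pow]; exact CFC.rpow_zero A ha
      have eB : CFC.rpow B (0:ℝ) = 1 := by
        rw [CFC.rpow_eq_pow]; exact CFC.rpow_zero B hb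
      have hF0 : ‖CFC.rpow A (0:ℝ) * CFC.rpow B (0:ℝ)‖ = 1 := by
        rw [eA, eB, one_mul, norm_one]
      have hbound : ∀ x ∈ Set.Icc (0:ℝ) 1,
          ‖CFC.rpow A x * CFC.rpow B x‖ ≤ max ‖A‖ 1 * max ‖B‖ 1 := by
        intro x hx
        have h1 : ‖CFC.rpow A x‖ ≤ max ‖A‖ 1 := by
          calc ‖CFC.rpow A x‖ ≤ ‖A‖ ^ x := my_norm_rpow_le A ha hx.1
            _ ≤ (max ‖A‖ 1) ^ x :=
              Real.rpow_le_rpow (norm_nonneg A) (le_max_left _ _) hx.1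
            _ ≤ (max ‖A‖ 1) ^ (1:ℝ) :=
              Real.rpow_le_rpow_of_exponent_le (le_max_right _ _) hx.2
            _ = max ‖A‖ 1 := Real.rpow_one _
        have h2 : ‖CFC.rpow B x‖ ≤ max ‖B‖ 1 := by
          calc ‖CFC.rpow B x‖ ≤ ‖B‖ ^ x := my_norm_rpow_le B hb hx.1
            _ ≤ (max ‖B‖ 1) ^ x :=
              Real.rpow_le_rpow (norm_nonneg B) (le_max_left _ _) hx.1
            _ ≤ (max ‖B‖ 1) ^ (1:ℝ) :=
              Real.rpow_le_rpow_of_exponent_le (le_max_right _ _) hx.2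
            _ = max ‖B‖ 1 := Real.rpow_one _
        calc ‖CFC.rpow A x * CFC.rpow B x‖ ≤ ‖CFC.rpow A x‖ * ‖CFC.rpow B x‖ := norm_mul_le _ _
          _ ≤ max ‖A‖ 1 * max ‖B‖ 1 := by
              have := norm_nonneg (CFC.rpow A x)
              have := norm_nonneg (CFC.rpow B x)
              have h3 : (0:ℝ) ≤ max ‖A‖ 1 := le_trans zero_le_one (le_max_right _ _)
              nlinarith
      have := cordes_iterate (fun u => ‖CFC.rpow A u * CFC.rpow B u‖)
        (fun x => norm_nonneg _) hF0 key (max ‖A‖ 1 * max ‖B‖ 1) hbound hs hs1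
      simpa [CFC.rpow_eq_pow, CFC.rpow_one A ha, CFC.rpow_one B hb] using this
end

section
/- (Interpolation inequality) Let H, K be separable Hilbert spaces, X : H → K a bounded linear operator, and A : H → H a bounded self-adjoint positive semidefinite operator. Then for every σ ∈ [0,1], ‖X Aᵠ‖ ≤ ‖X‖^{1−σ} ‖XA‖^{σ} (with Aᵠ = A^σ the operator power), where ‖·‖ is the operator norm. -/
open scoped NNReal InnerProductSpace ComplexConjugate

/-- Scalar tangent-line inequality for `t ↦ t^σ`. -/
lemma scalar_tangent {t l σ : ℝ} (ht : 0 ≤ t) (hl : 0 < l) (hσ0 : 0 ≤ σ) (hσ1 : σ ≤ 1) :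
    t ^ σ ≤ σ * l ^ (σ - 1) * t + (1 - σ) * l ^ σ := by
  have h := Real.geom_mean_le_arith_mean2_weighted hσ0 (by linarith : (0:ℝ) ≤ 1 - σ) ht hl.le
    (by ring)
  -- h : t ^ σ * l ^ (1 - σ) ≤ σ * t + (1 - σ) * l
  have hls : (0:ℝ) ≤ l ^ (σ - 1) := Real.rpow_nonneg hl.le _
  have h2 : t ^ σ * l ^ (1 - σ) * l ^ (σ - 1) ≤ (σ * t + (1 - σ) * l) * l ^ (σ - 1) :=
    mul_le_mul_of_nonneg_right h hls
  have e1 : l ^ (1 - σ) * l ^ (σ - 1) = 1 := by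
    rw [← Real.rpow_add hl]; norm_num
  have e2 : l * l ^ (σ - 1) = l ^ σ := by
    nth_rewrite 1 [← Real.rpow_one l]
    rw [← Real.rpow_add hl]; ring_nf
  calc t ^ σ = t ^ σ * (l ^ (1 - σ) * l ^ (σ - 1)) := by rw [e1, mul_one]
    _ = t ^ σ * l ^ (1 - σ) * l ^ (σ - 1) := by ring
    _ ≤ (σ * t + (1 - σ) * l) * l ^ (σ - 1) := h2
    _ = σ * l ^ (σ - 1) * t + (1 - σ) * (l * l ^ (σ - 1)) := by ring
    _ = σ * l ^ (σ - 1) * t + (1 - σ) * l ^ σ := by rw [e2]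

section Op
variable {H : Type*} [NormedAddCommGroup H] [InnerProductSpace ℂ H] [CompleteSpace H]

lemma op_tangent (A : H →L[ℂ] H) (hA : (0:H →L[ℂ] H) ≤ A) {σ : ℝ} (hσ0 : 0 < σ) (hσ1 : σ ≤ 1)
    (l : ℝ≥0) (hl : 0 < l) :
    CFC.rpow A σ * CFC.rpow A σ ≤
      (σ.toNNReal * l ^ (σ - 1)) • (A * A) + ((1 - σ).toNNReal * l ^ σ) • (1 : H →L[ℂ] H) := by
  set c1 : ℝ≥0 := σ.toNNReal * l ^ (σ - 1) with hc1
  set c2 : ℝ≥0 := (1 - σ).toNNReal * l ^ σ with hc2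
  have hcont : Continuous (fun x : ℝ≥0 => x ^ σ) := NNReal.continuous_rpow_const hσ0.le
  have h1 : CFC.rpow A σ * CFC.rpow A σ = cfc (fun x : ℝ≥0 => x ^ σ * x ^ σ) A := by
    rw [show CFC.rpow A σ = cfc (fun x : ℝ≥0 => x ^ σ) A from rfl,
      ← cfc_mul _ _ A hcont.continuousOn hcont.continuousOn]
  have h2 : c1 • (A * A) + c2 • (1 : H →L[ℂ] H)
      = cfc (fun x : ℝ≥0 => c1 * x ^ 2 + c2) A := by
    have e1 : cfc (fun x : ℝ≥0 => c1 * x ^ 2 + c2) A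
        = cfc (fun x : ℝ≥0 => c1 * x ^ 2) A + cfc (fun _ : ℝ≥0 => c2) A :=
      cfc_add (a := A) _ _ (by fun_prop) (by fun_prop)
    rw [e1, cfc_const_mul _ _ A (by fun_prop), cfc_pow_id A 2, cfc_const _ A,
      Algebra.algebraMap_eq_smul_one, sq]
  rw [h1, h2]
  apply cfc_mono ?_ (hcont.mul hcont).continuousOn (by fun_prop)
  intro x hx
  have key : ((x:ℝ)^2) ^ σ ≤ σ * (l:ℝ) ^ (σ - 1) * (x:ℝ)^2 + (1 - σ) * (l:ℝ) ^ σ :=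
    scalar_tangent (sq_nonneg _) (by exact_mod_cast hl) hσ0.le hσ1
  have lhs_eq : ((x : ℝ≥0) ^ σ * x ^ σ : ℝ≥0) = ((((x:ℝ)^2) ^ σ).toNNReal) := by
    ext
    push_cast
    rw [Real.coe_toNNReal _ (Real.rpow_nonneg (sq_nonneg _) _)]
    rw [← Real.rpow_natCast (x:ℝ) 2, ← Real.rpow_mul x.coe_nonneg,
      ← Real.rpow_add' x.coe_nonneg (by positivity : (0:ℝ) < σ + σ).ne']
    norm_num
    ring_nf
  show x ^ σ * x ^ σ ≤ _
  rw [lhs_eq]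
  have hrhs : (c1 * x ^ 2 + c2 : ℝ≥0)
      = (σ * (l:ℝ) ^ (σ - 1) * (x:ℝ)^2 + (1 - σ) * (l:ℝ) ^ σ).toNNReal := by
    ext
    have hnn : (0:ℝ) ≤ σ * (l:ℝ) ^ (σ - 1) * (x:ℝ)^2 + (1 - σ) * (l:ℝ) ^ σ :=
      add_nonneg (mul_nonneg (mul_nonneg hσ0.le (Real.rpow_nonneg l.coe_nonneg _)) (sq_nonneg _))
        (mul_nonneg (by linarith) (Real.rpow_nonneg l.coe_nonneg _))
    rw [Real.coe_toNNReal _ hnn]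
    push_cast [hc1, hc2, Real.coe_toNNReal _ hσ0.le,
      Real.coe_toNNReal _ (by linarith : (0:ℝ) ≤ 1 - σ)]
    ring
  rw [hrhs]
  exact Real.toNNReal_mono key
end Op

section Vec
variable {H : Type*} [NormedAddCommGroup H] [InnerProductSpace ℂ H] [CompleteSpace H]

open RCLike ContinuousLinearMap in
lemma vec_tangent (A : H →L[ℂ] H) (hA : A.IsPositive) {σ : ℝ} (hσ0 : 0 < σ) (hσ1 : σ ≤ 1)
    (u : H) {l : ℝ} (hl : 0 < l) :
    ‖CFC.rpow A σ u‖ ^ 2 ≤ σ * l ^ (σ - 1) * ‖A u‖ ^ 2 + (1 - σ) * l ^ σ * ‖u‖ ^ 2 := by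
  have hA' : (0 : H →L[ℂ] H) ≤ A := (ContinuousLinearMap.nonneg_iff_isPositive A).mpr hA
  have hAadj : ContinuousLinearMap.adjoint A = A := hA.isSelfAdjoint.adjoint_eq
  have hTadj : ContinuousLinearMap.adjoint (CFC.rpow A σ) = CFC.rpow A σ := by
    have h0 : (0 : H →L[ℂ] H) ≤ CFC.rpow A σ := CFC.rpow_nonneg
    exact ((ContinuousLinearMap.nonneg_iff_isPositive _).mp h0).isSelfAdjoint.adjoint_eq
  set l' : ℝ≥0 := l.toNNReal with hl'
  have hle := op_tangent A hA' hσ0 hσ1 l' (by simp [hl', hl])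
  have hpos := ((ContinuousLinearMap.nonneg_iff_isPositive _).mp
    (sub_nonneg.mpr hle)).2 u
  rw [ContinuousLinearMap.reApplyInnerSelf] at hpos
  have expand : ((σ.toNNReal * l' ^ (σ - 1)) • (A * A)
      + ((1 - σ).toNNReal * l' ^ σ) • (1 : H →L[ℂ] H) - CFC.rpow A σ * CFC.rpow A σ) u
      = (((σ.toNNReal * l' ^ (σ - 1) : ℝ≥0) : ℝ) : ℂ) • A (A u)
        + ((((1 - σ).toNNReal * l' ^ σ : ℝ≥0) : ℝ) : ℂ) • u
        - CFC.rpow A σ (CFC.rpow A σ u) := by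
    simp [ContinuousLinearMap.sub_apply, ContinuousLinearMap.add_apply,
      ContinuousLinearMap.smul_apply, ContinuousLinearMap.mul_apply, NNReal.smul_def,
      real_smul_eq_coe_smul (K := ℂ)]
  rw [expand] at hpos
  have h1 : ⟪CFC.rpow A σ (CFC.rpow A σ u), u⟫_ℂ = ⟪CFC.rpow A σ u, CFC.rpow A σ u⟫_ℂ := by
    simpa only [hTadj] using
      ContinuousLinearMap.adjoint_inner_left (CFC.rpow A σ) u (CFC.rpow A σ u)
  have h2 : ⟪A (A u), u⟫_ℂ = ⟪A u, A u⟫_ℂ := by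
    simpa only [hAadj] using ContinuousLinearMap.adjoint_inner_left A u (A u)
  simp only [inner_sub_left, inner_add_left, inner_smul_left, conj_ofReal, map_sub, map_add,
    h1, h2, re_ofReal_mul, inner_self_eq_norm_sq] at hpos
  have c1eq : ((σ.toNNReal * l' ^ (σ - 1) : ℝ≥0) : ℝ) = σ * l ^ (σ - 1) := by
    push_cast [hl', Real.coe_toNNReal _ hσ0.le, Real.coe_toNNReal _ hl.le]
    ring
  have c2eq : (((1 - σ).toNNReal * l' ^ σ : ℝ≥0) : ℝ) = (1 - σ) * l ^ σ := by
    push_cast [hl', Real.coe_toNNReal _ (by linarith : (0:ℝ) ≤ 1 - σ),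
      Real.coe_toNNReal _ hl.le]
    ring
  rw [c1eq, c2eq] at hpos
  simp only [inner_self_eq_norm_sq_to_K, Complex.conj_ofReal,
    (show (RCLike.ofReal : ℝ → ℂ) = Complex.ofReal from rfl), ← Complex.ofReal_pow,
    RCLike.re_to_complex, ← Complex.ofReal_mul, Complex.ofReal_re] at hpos
  linarith
end Vec

section Vec2
variable {H : Type*} [NormedAddCommGroup H] [InnerProductSpace ℂ H] [CompleteSpace H]

lemma vec_jensen (A : H →L[ℂ] H) (hA : A.IsPositive) {σ : ℝ} (hσ0 : 0 < σ) (hσ1 : σ ≤ 1)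
    (u : H) :
    ‖CFC.rpow A σ u‖ ^ 2 ≤ (‖A u‖ ^ 2) ^ σ * (‖u‖ ^ 2) ^ (1 - σ) := by
  by_cases hu : u = 0
  · have : (0:ℝ) ≤ (‖A u‖ ^ 2) ^ σ * (‖u‖ ^ 2) ^ (1 - σ) :=
      mul_nonneg (Real.rpow_nonneg (sq_nonneg _) _) (Real.rpow_nonneg (sq_nonneg _) _)
    simpa [hu] using this
  have hb : (0:ℝ) < ‖u‖ ^ 2 := pow_pos (norm_pos_iff.mpr hu) 2
  by_cases hAu : A u = 0
  · have hRHS : (‖A u‖ ^ 2) ^ σ * (‖u‖ ^ 2) ^ (1 - σ) = 0 := by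
      rw [hAu]
      simp [Real.zero_rpow hσ0.ne']
    rw [hRHS]
    have key : ∀ l : ℝ, 0 < l → ‖CFC.rpow A σ u‖ ^ 2 ≤ (1 - σ) * l ^ σ * ‖u‖ ^ 2 := by
      intro l hl
      have h := vec_tangent A hA hσ0 hσ1 u hl
      rw [hAu] at h
      simpa using h
    rcases eq_or_lt_of_le hσ1 with h1 | h1
    · simpa [← h1] using key 1 one_pos
    · -- take l → 0⁺
      have htend : Filter.Tendsto (fun l : ℝ => (1 - σ) * l ^ σ * ‖u‖ ^ 2)
          (nhdsWithin 0 (Set.Ioi 0)) (nhds 0) := by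
        have h1 : Filter.Tendsto (fun l : ℝ => l ^ σ) (nhds 0) (nhds ((0:ℝ) ^ σ)) :=
          (Real.continuousAt_rpow_const 0 σ (Or.inr hσ0.le)).tendsto
        rw [Real.zero_rpow hσ0.ne'] at h1
        have h2 := ((h1.const_mul (1 - σ)).mul_const (‖u‖ ^ 2)).mono_left
          (nhdsWithin_le_nhds (s := Set.Ioi (0:ℝ)))
        simpa [mul_assoc] using h2
      refine ge_of_tendsto htend ?_
      filter_upwards [self_mem_nhdsWithin] with l hl
      exact key l hl
  · have ha : (0:ℝ) < ‖A u‖ ^ 2 := pow_pos (norm_pos_iff.mpr hAu) 2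
    set a := ‖A u‖ ^ 2
    set b := ‖u‖ ^ 2
    have hl : (0:ℝ) < a / b := div_pos ha hb
    have h := vec_tangent A hA hσ0 hσ1 u hl
    have heq : σ * (a / b) ^ (σ - 1) * a + (1 - σ) * (a / b) ^ σ * b = a ^ σ * b ^ (1 - σ) := by
      have e1 : (a / b) ^ (σ - 1) = (a / b) ^ σ / (a / b) := by
        rw [Real.rpow_sub hl, Real.rpow_one]
      have e2 : (a / b) ^ σ = a ^ σ / b ^ σ := Real.div_rpow ha.le hb.le σ
      have e3 : b ^ (1 - σ) = b / b ^ σ := by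
        rw [Real.rpow_sub hb, Real.rpow_one]
      have hbσ : (0:ℝ) < b ^ σ := Real.rpow_pos_of_pos hb _
      rw [e1, e2, e3]
      field_simp
      ring
    calc ‖CFC.rpow A σ u‖ ^ 2 ≤ σ * (a / b) ^ (σ - 1) * a + (1 - σ) * (a / b) ^ σ * b := h
      _ = a ^ σ * b ^ (1 - σ) := heq
end Vec2

/-- Interpolation inequality: for `X : H →L K` bounded and `A` bounded self-adjoint positive
on `H`, `‖X A^σ‖ ≤ ‖X‖^(1-σ) ‖X A‖^σ` for all `σ ∈ [0,1]`. -/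
theorem stmt_4 {H K : Type*}
    [NormedAddCommGroup H] [InnerProductSpace ℂ H] [CompleteSpace H]
    [TopologicalSpace.SeparableSpace H]
    [NormedAddCommGroup K] [InnerProductSpace ℂ K] [CompleteSpace K]
    [TopologicalSpace.SeparableSpace K]
    (X : H →L[ℂ] K) (A : H →L[ℂ] H) (hA : A.IsPositive) (hAsa : IsSelfAdjoint A)
    (σ : ℝ) (hσ0 : 0 ≤ σ) (hσ1 : σ ≤ 1) :
    ‖X ∘L CFC.rpow A σ‖ ≤ ‖X‖ ^ (1 - σ) * ‖X ∘L A‖ ^ σ := by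
  have hA' : (0 : H →L[ℂ] H) ≤ A := (ContinuousLinearMap.nonneg_iff_isPositive A).mpr hA
  rcases eq_or_lt_of_le hσ0 with h0 | h0
  · -- σ = 0
    have hz : CFC.rpow A 0 = (1 : H →L[ℂ] H) := CFC.rpow_zero A hA'
    rw [← h0, hz]
    simp [ContinuousLinearMap.one_def, ContinuousLinearMap.comp_id]
  -- σ > 0
  set c : ℝ := ‖X‖ ^ (1 - σ) * ‖X ∘L A‖ ^ σ with hc
  have hcnn : 0 ≤ c :=
    mul_nonneg (Real.rpow_nonneg (norm_nonneg _) _) (Real.rpow_nonneg (norm_nonneg _) _)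
  have hTadj : ContinuousLinearMap.adjoint (CFC.rpow A σ) = CFC.rpow A σ := by
    have h0' : (0 : H →L[ℂ] H) ≤ CFC.rpow A σ := CFC.rpow_nonneg
    exact ((ContinuousLinearMap.nonneg_iff_isPositive _).mp h0').isSelfAdjoint.adjoint_eq
  have hnorm : ‖X ∘L CFC.rpow A σ‖ = ‖CFC.rpow A σ ∘L ContinuousLinearMap.adjoint X‖ := by
    rw [← ContinuousLinearMap.adjoint.norm_map (X ∘L CFC.rpow A σ),
      ContinuousLinearMap.adjoint_comp, hTadj]
  rw [hnorm]
  refine ContinuousLinearMap.opNorm_le_bound _ hcnn fun y => ?_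
  set u : H := ContinuousLinearMap.adjoint X y with hu
  have k2 : ‖u‖ ≤ ‖X‖ * ‖y‖ := by
    calc ‖u‖ ≤ ‖ContinuousLinearMap.adjoint X‖ * ‖y‖ :=
          (ContinuousLinearMap.adjoint X).le_opNorm y
      _ = ‖X‖ * ‖y‖ := by rw [ContinuousLinearMap.adjoint.norm_map]
  have k1 : ‖A u‖ ≤ ‖X ∘L A‖ * ‖y‖ := by
    have hAadjcomp : A ∘L ContinuousLinearMap.adjoint X
        = ContinuousLinearMap.adjoint (X ∘L A) := by
      rw [ContinuousLinearMap.adjoint_comp, hA.isSelfAdjoint.adjoint_eq]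
    calc ‖A u‖ = ‖(A ∘L ContinuousLinearMap.adjoint X) y‖ := rfl
      _ ≤ ‖A ∘L ContinuousLinearMap.adjoint X‖ * ‖y‖ := ContinuousLinearMap.le_opNorm _ y
      _ = ‖X ∘L A‖ * ‖y‖ := by
          rw [hAadjcomp, ContinuousLinearMap.adjoint.norm_map]
  have hj := vec_jensen A hA h0 hσ1 u
  have hsq : ‖(CFC.rpow A σ ∘L ContinuousLinearMap.adjoint X) y‖ ^ 2 ≤ (c * ‖y‖) ^ 2 := by
    have hmono : (‖A u‖ ^ 2) ^ σ * (‖u‖ ^ 2) ^ (1 - σ)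
        ≤ ((‖X ∘L A‖ * ‖y‖) ^ 2) ^ σ * ((‖X‖ * ‖y‖) ^ 2) ^ (1 - σ) :=
      mul_le_mul
        (Real.rpow_le_rpow (sq_nonneg _) (pow_le_pow_left₀ (norm_nonneg _) k1 2) hσ0)
        (Real.rpow_le_rpow (sq_nonneg _) (pow_le_pow_left₀ (norm_nonneg _) k2 2) (by linarith))
        (Real.rpow_nonneg (sq_nonneg _) _) (Real.rpow_nonneg (sq_nonneg _) _)
    have hsqpow : ∀ r : ℝ, 0 ≤ r → ∀ τ : ℝ, (r ^ 2) ^ τ = (r ^ τ) ^ 2 := by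
      intro r hr τ
      rw [← Real.rpow_natCast r 2, ← Real.rpow_natCast (r ^ τ) 2]
      simp only [← Real.rpow_mul hr]
      rw [mul_comm]
    have hre : ((‖X ∘L A‖ * ‖y‖) ^ 2) ^ σ * ((‖X‖ * ‖y‖) ^ 2) ^ (1 - σ) = (c * ‖y‖) ^ 2 := by
      rw [hsqpow _ (mul_nonneg (norm_nonneg _) (norm_nonneg _)) σ,
        hsqpow _ (mul_nonneg (norm_nonneg _) (norm_nonneg _)) (1 - σ),
        ← mul_pow]
      congr 1
      rw [Real.mul_rpow (norm_nonneg _) (norm_nonneg _),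
        Real.mul_rpow (norm_nonneg _) (norm_nonneg _), hc]
      have hy : ‖y‖ ^ σ * ‖y‖ ^ (1 - σ) = ‖y‖ := by
        rw [← Real.rpow_add' (norm_nonneg _) (by norm_num)]
        norm_num
      calc ‖X ∘L A‖ ^ σ * ‖y‖ ^ σ * (‖X‖ ^ (1 - σ) * ‖y‖ ^ (1 - σ))
          = ‖X‖ ^ (1 - σ) * ‖X ∘L A‖ ^ σ * (‖y‖ ^ σ * ‖y‖ ^ (1 - σ)) := by ring
        _ = ‖X‖ ^ (1 - σ) * ‖X ∘L A‖ ^ σ * ‖y‖ := by rw [hy]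
    calc ‖(CFC.rpow A σ ∘L ContinuousLinearMap.adjoint X) y‖ ^ 2
        = ‖CFC.rpow A σ u‖ ^ 2 := rfl
      _ ≤ (‖A u‖ ^ 2) ^ σ * (‖u‖ ^ 2) ^ (1 - σ) := hj
      _ ≤ ((‖X ∘L A‖ * ‖y‖) ^ 2) ^ σ * ((‖X‖ * ‖y‖) ^ 2) ^ (1 - σ) := hmono
      _ = (c * ‖y‖) ^ 2 := hre
  have h1 := Real.sqrt_le_sqrt hsq
  rw [Real.sqrt_sq (norm_nonneg _), Real.sqrt_sq (mul_nonneg hcnn (norm_nonneg _))] at h1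
  exact h1
end

section
/- Let H be a separable Hilbert space, A, B bounded self-adjoint positive linear operators on H, and λ > 0. Define β = λ_max[(B+λI)^{−1/2}(B−A)(B+λI)^{−1/2}], the supremum of ⟨f, (B+λI)^{−1/2}(B−A)(B+λI)^{−1/2} f⟩ over unit vectors f. Then β < 1 and ‖(A+λI)^{−1/2}(B+λI)^{1/2}‖ ≤ (1−β)^{−1/2}. -/
set_option maxHeartbeats 1000000

open ContinuousLinearMap RCLike
open scoped InnerProduct NNReal

section Aux
variable {H : Type*} [NormedAddCommGroup H] [InnerProductSpace ℂ H] [CompleteSpace H]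

local notation "⟪" x ", " y "⟫" => @inner ℂ _ _ x y

lemma aux_inner_lower {C : H →L[ℂ] H} (hC : C.IsPositive) {lam : ℝ} (x : H) :
    lam * ‖x‖ ^ 2 ≤ re ⟪(C + lam • 1) x, x⟫ := by
  have h1 : (C + lam • (1 : H →L[ℂ] H)) x = C x + (lam : ℂ) • x := by
    simp [ContinuousLinearMap.smul_apply]
  have h2 : re ⟪(lam : ℂ) • x, x⟫ = lam * ‖x‖ ^ 2 := by
    rw [inner_smul_left, ← inner_self_eq_norm_sq (𝕜 := ℂ)]
    simp [mul_comm]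
  have := hC.2 x
  simp only [ContinuousLinearMap.reApplyInnerSelf] at this
  rw [h1, inner_add_left, map_add, h2]
  linarith

lemma aux_pos {C : H →L[ℂ] H} (hC : C.IsPositive) {lam : ℝ} (hlam : 0 ≤ lam) :
    (C + lam • 1).IsPositive := by
  refine isPositive_def'.mpr ⟨hC.isSelfAdjoint.add ?_, fun x => ?_⟩
  · rw [isSelfAdjoint_iff, star_smul, star_trivial, star_one]
  · have := aux_inner_lower hC (lam := lam) x
    have h0 : 0 ≤ lam * ‖x‖ ^ 2 := by positivity
    exact h0.trans this

lemma aux_isUnit {C : H →L[ℂ] H} (hC : C.IsPositive) {lam : ℝ} (hlam : 0 < lam) :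
    IsUnit (C + lam • 1) := by
  refine isUnit_of_forall_le_norm_inner_map _ (c := ⟨lam, hlam.le⟩) (by exact_mod_cast hlam)
    fun x => ?_
  calc ‖x‖ ^ 2 * ((⟨lam, hlam.le⟩ : NNReal) : ℝ) = lam * ‖x‖ ^ 2 := by push_cast; ring
  _ ≤ re ⟪(C + lam • 1) x, x⟫ := aux_inner_lower hC x
  _ ≤ ‖⟪(C + lam • 1) x, x⟫‖ := re_le_norm _

lemma aux_symm {U : H →L[ℂ] H} (hU : IsSelfAdjoint U) (x y : H) :
    ⟪U x, y⟫ = ⟪x, U y⟫ :=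
  (isSelfAdjoint_iff_isSymmetric.mp hU) x y

end Aux

section Rpow
variable {H : Type*} [NormedAddCommGroup H] [InnerProductSpace ℂ H] [CompleteSpace H]

lemma aux_rpow_nonneg (T : H →L[ℂ] H) (y : ℝ) : 0 ≤ CFC.rpow T y := CFC.rpow_nonneg

lemma aux_rpow_sa (T : H →L[ℂ] H) (y : ℝ) : IsSelfAdjoint (CFC.rpow T y) :=
  ((ContinuousLinearMap.nonneg_iff_isPositive _).mp (aux_rpow_nonneg T y)).isSelfAdjoint

lemma aux_QQ {T : H →L[ℂ] H} (h0 : (0:H→L[ℂ]H) ≤ T) (hu : IsUnit T) :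
    CFC.rpow T ((1/2:ℝ)) * CFC.rpow T ((1/2:ℝ)) = T := by
  have hs := spectrum.zero_notMem ℝ≥0 hu
  simp only [CFC.rpow_eq_pow]
  rw [← CFC.rpow_add hu]
  norm_num
  exact CFC.rpow_one T h0

lemma aux_QR {T : H →L[ℂ] H} (h0 : (0:H→L[ℂ]H) ≤ T) (hu : IsUnit T) :
    CFC.rpow T ((1/2:ℝ)) * CFC.rpow T (-(1/2:ℝ)) = 1 := by
  simp only [CFC.rpow_eq_pow]
  exact CFC.rpow_mul_rpow_neg (1/2) (hu.isStrictlyPositive h0)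

lemma aux_RQ {T : H →L[ℂ] H} (h0 : (0:H→L[ℂ]H) ≤ T) (hu : IsUnit T) :
    CFC.rpow T (-(1/2:ℝ)) * CFC.rpow T ((1/2:ℝ)) = 1 := by
  simp only [CFC.rpow_eq_pow]
  exact CFC.rpow_neg_mul_rpow (1/2) (hu.isStrictlyPositive h0)

lemma aux_RTR {T : H →L[ℂ] H} (h0 : (0:H→L[ℂ]H) ≤ T) (hu : IsUnit T) :
    CFC.rpow T (-(1/2:ℝ)) * T * CFC.rpow T (-(1/2:ℝ)) = 1 := by
  have h1 : CFC.rpow T (-(1/2:ℝ)) * T * CFC.rpow T (-(1/2:ℝ)) =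
      CFC.rpow T (-(1/2:ℝ)) * (CFC.rpow T ((1/2:ℝ)) * CFC.rpow T ((1/2:ℝ))) *
        CFC.rpow T (-(1/2:ℝ)) := by rw [aux_QQ h0 hu]
  rw [h1, ← mul_assoc, mul_assoc _ _ (CFC.rpow T (-(1/2:ℝ))), aux_QR h0 hu, mul_one,
    aux_RQ h0 hu]

end Rpow

/-- `λ_max T = sup_{‖f‖ ≤ 1} ⟨f, T f⟩` (real part of the quadratic form). -/
noncomputable def lamMax {H : Type*} [NormedAddCommGroup H] [InnerProductSpace ℂ H]
    (T : H →L[ℂ] H) : ℝ :=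
  ⨆ f : { f : H // ‖f‖ ≤ 1 }, T.reApplyInnerSelf (f : H)

section Main
variable {H : Type*} [NormedAddCommGroup H] [InnerProductSpace ℂ H] [CompleteSpace H]
local notation "⟪" x ", " y "⟫" => @inner ℂ _ _ x y

instance : Nonempty { f : H // ‖f‖ ≤ 1 } := ⟨⟨0, by simp⟩⟩

theorem stmt_5' 
    (A B : H →L[ℂ] H) (hA : A.IsPositive) (hB : B.IsPositive)
    (hAsa : IsSelfAdjoint A) (hBsa : IsSelfAdjoint B)
    (lam : ℝ) (hlam : 0 < lam) :
    lamMax (CFC.rpow (B + lam • (1 : H →L[ℂ] H)) (-(1/2) : ℝ) * (B - A) *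
        CFC.rpow (B + lam • (1 : H →L[ℂ] H)) (-(1/2) : ℝ)) < 1 ∧
    ‖CFC.rpow (A + lam • (1 : H →L[ℂ] H)) (-(1/2) : ℝ) *
        CFC.rpow (B + lam • (1 : H →L[ℂ] H)) ((1/2) : ℝ)‖ ≤
      (1 - lamMax (CFC.rpow (B + lam • (1 : H →L[ℂ] H)) (-(1/2) : ℝ) * (B - A) *
        CFC.rpow (B + lam • (1 : H →L[ℂ] H)) (-(1/2) : ℝ))) ^ (-(1/2) : ℝ) := by
  set T := B + lam • (1 : H →L[ℂ] H) with hTdef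
  set S := A + lam • (1 : H →L[ℂ] H) with hSdef
  have hTpos := aux_pos hB hlam.le
  have hSpos := aux_pos hA hlam.le
  have hT0 : (0 : H →L[ℂ] H) ≤ T := (ContinuousLinearMap.nonneg_iff_isPositive _).mpr hTpos
  have hS0 : (0 : H →L[ℂ] H) ≤ S := (ContinuousLinearMap.nonneg_iff_isPositive _).mpr hSpos
  have hTu := aux_isUnit hB hlam
  have hSu := aux_isUnit hA hlam
  set R := CFC.rpow T (-(1/2) : ℝ) with hRdef
  set Q := CFC.rpow T ((1/2) : ℝ) with hQdef
  set P := CFC.rpow S (-(1/2) : ℝ) with hPdef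
  have hRsa := aux_rpow_sa T (-(1/2) : ℝ)
  have hQsa := aux_rpow_sa T ((1/2) : ℝ)
  have hPsa := aux_rpow_sa S (-(1/2) : ℝ)
  have hQQ : Q * Q = T := aux_QQ hT0 hTu
  have hQR : Q * R = 1 := aux_QR hT0 hTu
  have hRQ : R * Q = 1 := aux_RQ hT0 hTu
  have hRTR : R * T * R = 1 := aux_RTR hT0 hTu
  have hPSP : P * S * P = 1 := aux_RTR hS0 hSu
  set M := R * (B - A) * R with hMdef
  set c : ℝ := 1 - lam / (‖B‖ + lam) with hcdef
  have hBlam : 0 < ‖B‖ + lam := by positivity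
  have hc1 : c < 1 := by
    have : 0 < lam / (‖B‖ + lam) := by positivity
    rw [hcdef]; linarith
  have hc0 : 0 ≤ c := by
    have : lam / (‖B‖ + lam) ≤ 1 := by
      rw [div_le_one hBlam]; linarith [norm_nonneg B]
    rw [hcdef]; linarith
  have hQnorm : ‖Q‖ * ‖Q‖ ≤ ‖B‖ + lam := by
    have h1 : ‖Q‖ * ‖Q‖ = ‖T‖ := by
      conv_rhs => rw [← hQQ]
      conv_lhs => rw [← CStarRing.norm_star_mul_self (x := Q), hQsa.star_eq]
    rw [h1]
    calc ‖T‖ ≤ ‖B‖ + ‖lam • (1 : H →L[ℂ] H)‖ := norm_add_le _ _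
    _ ≤ ‖B‖ + lam := by
        have h2 : ‖lam • (1 : H →L[ℂ] H)‖ ≤ lam := by
          rw [norm_smul, Real.norm_eq_abs, abs_of_pos hlam]
          have := ContinuousLinearMap.norm_id_le (𝕜 := ℂ) (E := H)
          have h3 : (1 : H →L[ℂ] H) = ContinuousLinearMap.id ℂ H := rfl
          rw [h3]
          nlinarith
        linarith
  have hMf : ∀ f : H, M.reApplyInnerSelf f = re ⟪(B - A) (R f), R f⟫ := by
    intro f
    simp only [ContinuousLinearMap.reApplyInnerSelf, hMdef, ContinuousLinearMap.mul_apply]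
    rw [aux_symm hRsa]
  have hTRf : ∀ f : H, re ⟪T (R f), R f⟫ = ‖f‖ ^ 2 := by
    intro f
    rw [← aux_symm hRsa]
    have h1 : R (T (R f)) = (R * T * R) f := rfl
    rw [h1, hRTR, ContinuousLinearMap.one_apply, inner_self_eq_norm_sq (𝕜 := ℂ)]
  have hfQR : ∀ f : H, f = Q (R f) := by
    intro f
    have h1 : Q (R f) = (Q * R) f := rfl
    rw [h1, hQR, ContinuousLinearMap.one_apply]
  have step1 : ∀ f : H, M.reApplyInnerSelf f ≤ c * ‖f‖ ^ 2 := by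
    intro f
    rw [hMf f]
    set g := R f with hg
    have hAg : 0 ≤ re ⟪A g, g⟫ := hA.re_inner_nonneg_left g
    have hsub : re ⟪(B - A) g, g⟫ = re ⟪B g, g⟫ - re ⟪A g, g⟫ := by
      rw [ContinuousLinearMap.sub_apply, inner_sub_left, map_sub]
    have hTgBg : re ⟪T g, g⟫ = re ⟪B g, g⟫ + lam * ‖g‖ ^ 2 := by
      have h1 : T g = B g + (lam : ℂ) • g := by
        simp [hTdef, ContinuousLinearMap.add_apply, ContinuousLinearMap.smul_apply]
      have h2 : re ⟪(lam : ℂ) • g, g⟫ = lam * ‖g‖ ^ 2 := by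
        rw [inner_smul_left, ← inner_self_eq_norm_sq (𝕜 := ℂ)]
        simp [mul_comm]
      rw [h1, inner_add_left, map_add, h2]
    have hTg : re ⟪T g, g⟫ = ‖f‖ ^ 2 := hTRf f
    have hfg : ‖f‖ ^ 2 ≤ (‖B‖ + lam) * ‖g‖ ^ 2 := by
      have h1 : ‖f‖ ≤ ‖Q‖ * ‖g‖ := by
        conv_lhs => rw [hfQR f]
        exact Q.le_opNorm (R f)
      nlinarith [norm_nonneg f, norm_nonneg g, norm_nonneg Q]
    have key : lam * (‖f‖ ^ 2 / (‖B‖ + lam)) ≤ lam * ‖g‖ ^ 2 := by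
      apply mul_le_mul_of_nonneg_left _ hlam.le
      rw [div_le_iff₀ hBlam]
      nlinarith
    have hcr : c * ‖f‖ ^ 2 = ‖f‖ ^ 2 - lam * (‖f‖ ^ 2 / (‖B‖ + lam)) := by
      rw [hcdef]; field_simp
    clear_value g
    have t1 : re ⟪(B - A) g, g⟫ ≤ re ⟪B g, g⟫ := by
      rw [hsub]; exact sub_le_self _ hAg
    have t2 : re ⟪B g, g⟫ = ‖f‖ ^ 2 - lam * ‖g‖ ^ 2 := by
      rw [← hTg, hTgBg]; ring
    have t3 : ‖f‖ ^ 2 - lam * ‖g‖ ^ 2 ≤ c * ‖f‖ ^ 2 := by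
      rw [hcr]; exact sub_le_sub_left key _
    exact t1.trans (by rw [t2]; exact t3)
  have hbdd : BddAbove (Set.range fun f : { f : H // ‖f‖ ≤ 1 } =>
      M.reApplyInnerSelf (f : H)) := by
    refine ⟨c, ?_⟩
    rintro x ⟨f, rfl⟩
    refine (step1 f).trans ?_
    have h5 : ‖(f : H)‖ ^ 2 ≤ 1 := pow_le_one₀ (norm_nonneg _) f.2
    calc c * ‖(f : H)‖ ^ 2 ≤ c * 1 := mul_le_mul_of_nonneg_left h5 hc0
    _ = c := mul_one c
  have hβle : lamMax M ≤ c := by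
    refine ciSup_le fun f => ?_
    refine (step1 f).trans ?_
    have h5 : ‖(f : H)‖ ^ 2 ≤ 1 := pow_le_one₀ (norm_nonneg _) f.2
    calc c * ‖(f : H)‖ ^ 2 ≤ c * 1 := mul_le_mul_of_nonneg_left h5 hc0
    _ = c := mul_one c
  set β := lamMax M with hβdef
  have hβ1 : β < 1 := lt_of_le_of_lt hβle hc1
  refine ⟨hβ1, ?_⟩
  have step2 : ∀ f : H, M.reApplyInnerSelf f ≤ β * ‖f‖ ^ 2 := by
    intro f
    rcases eq_or_ne f 0 with rfl | hf
    · simp [ContinuousLinearMap.reApplyInnerSelf]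
    · have hnf : 0 < ‖f‖ := norm_pos_iff.mpr hf
      set u : H := ((‖f‖⁻¹ : ℝ) : ℂ) • f with hu
      have hu1 : ‖u‖ = 1 := by
        rw [hu, norm_smul]
        simp [norm_inv, abs_of_pos hnf]
        field_simp
      have h1 : M.reApplyInnerSelf u ≤ β := by
        rw [hβdef, lamMax]
        exact le_ciSup hbdd ⟨u, hu1.le⟩
      have h2 : M.reApplyInnerSelf u = ‖f‖⁻¹ ^ 2 * M.reApplyInnerSelf f := by
        rw [hu, M.reApplyInnerSelf_smul]
        congr 1
        simp
      calc M.reApplyInnerSelf f = ‖f‖ ^ 2 * M.reApplyInnerSelf u := by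
            rw [h2]; field_simp
      _ ≤ ‖f‖ ^ 2 * β := mul_le_mul_of_nonneg_left h1 (sq_nonneg _)
      _ = β * ‖f‖ ^ 2 := mul_comm _ _
  have step3 : ∀ g : H, (1 - β) * ‖Q g‖ ^ 2 ≤ re ⟪S g, g⟫ := by
    intro g
    have hRQg : R (Q g) = g := by
      have h1 : R (Q g) = (R * Q) g := rfl
      rw [h1, hRQ, ContinuousLinearMap.one_apply]
    have hMQg : M.reApplyInnerSelf (Q g) = re ⟪(B - A) g, g⟫ := by
      rw [hMf (Q g), hRQg]
    have hSg : re ⟪S g, g⟫ = re ⟪T g, g⟫ - re ⟪(B - A) g, g⟫ := by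
      have h1 : S g = T g - (B - A) g := by
        simp only [hSdef, hTdef, ContinuousLinearMap.add_apply,
          ContinuousLinearMap.sub_apply, ContinuousLinearMap.smul_apply]
        abel
      rw [h1, inner_sub_left, map_sub]
    have hTQ : re ⟪T g, g⟫ = ‖Q g‖ ^ 2 := by
      have h1 : T g = Q (Q g) := by
        have h2 : Q (Q g) = (Q * Q) g := rfl
        rw [h2, hQQ]
      rw [h1, aux_symm hQsa, inner_self_eq_norm_sq (𝕜 := ℂ)]
    have h3 := step2 (Q g)
    rw [hMQg] at h3
    rw [hSg, hTQ]
    linarith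
  have h1β : 0 < 1 - β := by linarith
  have hQP : ∀ h : H, ‖(Q * P) h‖ ^ 2 ≤ (1 - β)⁻¹ * ‖h‖ ^ 2 := by
    intro h
    have h3 := step3 (P h)
    have hS1 : re ⟪S (P h), P h⟫ = ‖h‖ ^ 2 := by
      rw [← aux_symm hPsa]
      have h1 : P (S (P h)) = (P * S * P) h := rfl
      rw [h1, hPSP, ContinuousLinearMap.one_apply, inner_self_eq_norm_sq (𝕜 := ℂ)]
    rw [hS1] at h3
    have h4 : (Q * P) h = Q (P h) := rfl
    rw [h4, inv_mul_eq_div, le_div_iff₀ h1β]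
    nlinarith
  have hnQP : ‖Q * P‖ ≤ (1 - β) ^ (-(1/2) : ℝ) := by
    have hrw : (1 - β) ^ (-(1/2) : ℝ) = Real.sqrt ((1 - β)⁻¹) := by
      rw [Real.rpow_neg h1β.le, Real.sqrt_eq_rpow, Real.inv_rpow h1β.le]
    rw [hrw]
    refine (Q * P).opNorm_le_bound (Real.sqrt_nonneg _) fun h => ?_
    calc ‖(Q * P) h‖ = Real.sqrt (‖(Q * P) h‖ ^ 2) := (Real.sqrt_sq (norm_nonneg _)).symm
    _ ≤ Real.sqrt ((1 - β)⁻¹ * ‖h‖ ^ 2) := Real.sqrt_le_sqrt (hQP h)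
    _ = Real.sqrt ((1 - β)⁻¹) * ‖h‖ := by
        rw [Real.sqrt_mul (inv_nonneg.mpr h1β.le), Real.sqrt_sq (norm_nonneg _)]
  have hPQ : P * Q = star (Q * P) := by
    rw [star_mul, hPsa.star_eq, hQsa.star_eq]
  calc ‖P * Q‖ = ‖star (Q * P)‖ := by rw [hPQ]
  _ = ‖Q * P‖ := norm_star _
  _ ≤ _ := hnQP

end Main


/-- With `β = λ_max((B+λI)^{-1/2}(B-A)(B+λI)^{-1/2})` one has `β < 1` and
`‖(A+λI)^{-1/2}(B+λI)^{1/2}‖ ≤ (1-β)^{-1/2}`. -/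
theorem stmt_5 {H : Type*} [NormedAddCommGroup H] [InnerProductSpace ℂ H] [CompleteSpace H]
    [TopologicalSpace.SeparableSpace H]
    (A B : H →L[ℂ] H) (hA : A.IsPositive) (hB : B.IsPositive)
    (hAsa : IsSelfAdjoint A) (hBsa : IsSelfAdjoint B)
    (lam : ℝ) (hlam : 0 < lam) :
    lamMax (CFC.rpow (B + lam • (1 : H →L[ℂ] H)) (-(1/2) : ℝ) * (B - A) *
        CFC.rpow (B + lam • (1 : H →L[ℂ] H)) (-(1/2) : ℝ)) < 1 ∧
    ‖CFC.rpow (A + lam • (1 : H →L[ℂ] H)) (-(1/2) : ℝ) *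
        CFC.rpow (B + lam • (1 : H →L[ℂ] H)) ((1/2) : ℝ)‖ ≤
      (1 - lamMax (CFC.rpow (B + lam • (1 : H →L[ℂ] H)) (-(1/2) : ℝ) * (B - A) *
        CFC.rpow (B + lam • (1 : H →L[ℂ] H)) (-(1/2) : ℝ))) ^ (-(1/2) : ℝ) :=
  stmt_5' A B hA hB hAsa hBsa lam hlam
end

section
/- Let L be a positive self-adjoint bounded operator on a separable Hilbert space, λ > 0, and r ∈ [1/2, 1]. Suppose g ∈ H and set f = L^r g. Then ‖f − L(L+λI)^{−1} f‖ ≤ λ^r ‖g‖. -/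
set_option maxHeartbeats 1000000
open scoped NNReal


/-- For a bounded positive self-adjoint `L`, `λ > 0`, `r ∈ [1/2,1]`, and `f = L^r g`:
`‖f - L(L+λI)⁻¹ f‖ ≤ λ^r ‖g‖`. -/
theorem stmt_17 {H : Type*} [NormedAddCommGroup H] [InnerProductSpace ℂ H] [CompleteSpace H]
    [TopologicalSpace.SeparableSpace H]
    (L : H →L[ℂ] H) (hL : L.IsPositive) (hsa : IsSelfAdjoint L)
    (lam r : ℝ) (hlam : 0 < lam) (hr1 : 1 / 2 ≤ r) (hr2 : r ≤ 1) (g : H) :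
    ‖CFC.rpow L r g - (L * Ring.inverse (L + lam • (1 : H →L[ℂ] H))) (CFC.rpow L r g)‖ ≤
      lam ^ r * ‖g‖ := by
  have hr0 : (0:ℝ) ≤ r := le_trans (by norm_num) hr1
  have hL0 : (0 : H →L[ℂ] H) ≤ L := (ContinuousLinearMap.nonneg_iff_isPositive L).2 hL
  set μ : ℝ≥0 := ⟨lam, hlam.le⟩ with hμdef
  have hμ0 : μ ≠ 0 := by
    simp only [hμdef, ne_eq, ← NNReal.coe_eq_zero, NNReal.coe_mk]
    exact fun h => hlam.ne' (congrArg Subtype.val h)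
  have hne : ∀ x : ℝ≥0, x + μ ≠ 0 := fun x => by simp [hμ0]
  have c1 : Continuous (fun x : ℝ≥0 => x + μ) := by fun_prop
  have c2 : Continuous (fun x : ℝ≥0 => (x + μ)⁻¹) := c1.inv₀ hne
  have c3 : Continuous (fun x : ℝ≥0 => x ^ r) := NNReal.continuous_rpow_const hr0
  have hrpow : CFC.rpow L r = cfc (fun x : ℝ≥0 => x ^ r) L := CFC.rpow_def
  have hId : cfc (fun x : ℝ≥0 => x) L = L := cfc_id' ℝ≥0 L
  -- step 1 : L + lam • 1 as cfc
  have step1 : L + lam • (1 : H →L[ℂ] H) = cfc (fun x : ℝ≥0 => x + μ) L := by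
    have h1 : lam • (1 : H →L[ℂ] H) = algebraMap ℝ≥0 (H →L[ℂ] H) μ := by
      rw [Algebra.algebraMap_eq_smul_one, NNReal.smul_def]; rfl
    rw [cfc_add L _ _ (by fun_prop) (by fun_prop), cfc_id' ℝ≥0 L, cfc_const μ L, h1]
  have step2 : Ring.inverse (L + lam • (1 : H →L[ℂ] H)) =
      cfc (fun x : ℝ≥0 => (x + μ)⁻¹) L := by
    rw [step1, ← cfc_inv (fun x : ℝ≥0 => x + μ) L (fun x _ => hne x) c1.continuousOn hL0]
  have m1 : cfc (fun x : ℝ≥0 => x * (x + μ)⁻¹) L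
      = cfc (fun x : ℝ≥0 => x) L * cfc (fun x : ℝ≥0 => (x + μ)⁻¹) L :=
    cfc_mul _ _ L (by fun_prop) c2.continuousOn
  have m2 : cfc (fun x : ℝ≥0 => x * (x + μ)⁻¹ * x ^ r) L
      = cfc (fun x : ℝ≥0 => x * (x + μ)⁻¹) L * cfc (fun x : ℝ≥0 => x ^ r) L :=
    cfc_mul _ _ L ((continuous_id.mul c2).continuousOn) c3.continuousOn
  have step3 : L * Ring.inverse (L + lam • (1 : H →L[ℂ] H)) * CFC.rpow L r =
      cfc (fun x : ℝ≥0 => x * (x + μ)⁻¹ * x ^ r) L := by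
    rw [step2, hrpow, m2, m1, hId]
  have m3 : cfc (fun x : ℝ≥0 => x * (x + μ)⁻¹ * x ^ r + μ * (x + μ)⁻¹ * x ^ r) L
      = cfc (fun x : ℝ≥0 => x * (x + μ)⁻¹ * x ^ r) L
        + cfc (fun x : ℝ≥0 => μ * (x + μ)⁻¹ * x ^ r) L :=
    cfc_add L _ _ ((continuous_id.mul c2).mul c3).continuousOn
      (((continuous_const.mul c2).mul c3).continuousOn)
  have step4 : cfc (fun x : ℝ≥0 => x ^ r) L =
      cfc (fun x : ℝ≥0 => x * (x + μ)⁻¹ * x ^ r) L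
        + cfc (fun x : ℝ≥0 => μ * (x + μ)⁻¹ * x ^ r) L := by
    rw [← m3]
    refine cfc_congr fun x _ => ?_
    rw [mul_assoc, mul_assoc, ← add_mul, ← mul_assoc, mul_inv_cancel₀ (hne x), one_mul]
  set X := L * Ring.inverse (L + lam • (1 : H →L[ℂ] H)) with hX
  have heq : CFC.rpow L r = X * CFC.rpow L r
      + cfc (fun x : ℝ≥0 => μ * (x + μ)⁻¹ * x ^ r) L := by
    conv_lhs => rw [hrpow, step4]
    rw [step3]
  have happ : CFC.rpow L r g - X (CFC.rpow L r g)
      = cfc (fun x : ℝ≥0 => μ * (x + μ)⁻¹ * x ^ r) L g := by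
    nth_rewrite 1 [heq]
    rw [ContinuousLinearMap.add_apply, ContinuousLinearMap.mul_apply]
    exact add_sub_cancel_left _ _
  rw [happ]
  -- pointwise bound
  have hbound : ∀ x : ℝ≥0, (μ * (x + μ)⁻¹ * x ^ r : ℝ≥0) ≤ μ ^ r := by
    intro x
    have hdiv : μ * (x + μ)⁻¹ * x ^ r = μ * x ^ r / (x + μ) := by
      rw [div_eq_mul_inv]; ring
    rw [hdiv, div_le_iff₀ (zero_lt_iff.mpr (hne x))]
    set ρ : ℝ≥0 := r.toNNReal with hρdef
    have hρr : (ρ : ℝ) = r := Real.coe_toNNReal r hr0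
    have hρ1 : ρ ≤ 1 := by
      rw [← NNReal.coe_le_coe, hρr, NNReal.coe_one]; exact hr2
    have hsum : ρ + (1 - ρ) = 1 := add_tsub_cancel_of_le hρ1
    have hamgm : x ^ r * μ ^ ((1 - ρ : ℝ≥0) : ℝ) ≤ x + μ := by
      calc x ^ r * μ ^ ((1 - ρ : ℝ≥0) : ℝ)
          = x ^ (ρ : ℝ) * μ ^ ((1 - ρ : ℝ≥0) : ℝ) := by rw [hρr]
        _ ≤ ρ * x + (1 - ρ) * μ := NNReal.geom_mean_le_arith_mean2_weighted _ _ _ _ hsum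
        _ ≤ 1 * x + 1 * μ := by
            gcongr <;> first | exact hρ1 | exact tsub_le_self
        _ = x + μ := by rw [one_mul, one_mul]
    have hμsplit : μ * x ^ r = μ ^ r * (x ^ r * μ ^ ((1 - ρ : ℝ≥0) : ℝ)) := by
      have hcoe : ((1 - ρ : ℝ≥0) : ℝ) = 1 - r := by
        rw [NNReal.coe_sub hρ1, hρr, NNReal.coe_one]
      rw [hcoe, ← mul_assoc, mul_comm (μ ^ r) (x ^ r), mul_assoc,
        ← NNReal.rpow_add hμ0, add_sub_cancel, NNReal.rpow_one, mul_comm]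
    rw [hμsplit]
    exact mul_le_mul_right hamgm _
  have hnorm : ‖cfc (fun x : ℝ≥0 => μ * (x + μ)⁻¹ * x ^ r) L‖ ≤ lam ^ r := by
    have h := nnnorm_cfc_nnreal_le (f := fun x : ℝ≥0 => μ * (x + μ)⁻¹ * x ^ r) (a := L)
      (c := μ ^ r) (fun x _ => hbound x)
    calc ‖cfc (fun x : ℝ≥0 => μ * (x + μ)⁻¹ * x ^ r) L‖
        = ((‖cfc (fun x : ℝ≥0 => μ * (x + μ)⁻¹ * x ^ r) L‖₊ : ℝ≥0) : ℝ) := rfl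
      _ ≤ ((μ ^ r : ℝ≥0) : ℝ) := NNReal.coe_le_coe.2 h
      _ = lam ^ r := by rw [NNReal.coe_rpow]; rfl
  calc ‖cfc (fun x : ℝ≥0 => μ * (x + μ)⁻¹ * x ^ r) L g‖
      ≤ ‖cfc (fun x : ℝ≥0 => μ * (x + μ)⁻¹ * x ^ r) L‖ * ‖g‖ :=
        ContinuousLinearMap.le_opNorm _ _
    _ ≤ lam ^ r * ‖g‖ := by gcongr
end
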